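/- If a Hausdorff topological group G contains a compact normal subgroup N such that G/N is totally minimal, then G is totally minimal. -/

import Mathlib

universe u v

/-- A Hausdorff topological group is totally minimal if every continuous surjective
homomorphism onto a Hausdorff topological group is open. -/
def IsTotallyMinimal (G : Type u) [Group G] [TopologicalSpace G] : Prop :=
  ∀ (H : Type v) [Group H] [TopologicalSpace H] [IsTopologicalGroup H] [T2Space H]
    (f : G →* H), Continuous f → Function.Surjective f → IsOpenMap f

open scoped Pointwise Topology

theorem totallyMinimal_of_compact_kernel {G : Type u}
    [Group G] [TopologicalSpace G] [IsTopologicalGroup G] [T2Space G]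
    (N : Subgroup G) [N.Normal] (hN : IsCompact (N : Set G))
    (h : IsTotallyMinimal.{u, u} (G ⧸ N)) : IsTotallyMinimal.{u, u} G := by
  intro H _ _ _ _ f hf hsurj
  -- the image subgroup `K = f(N)` is compact, closed and normal
  set K : Subgroup H := N.map f with hK
  haveI hKnormal : K.Normal := Subgroup.Normal.map ‹N.Normal› f hsurj
  have hKcomp : IsCompact (K : Set H) := by
    simpa [hK, Subgroup.coe_map] using hN.image hf
  haveI hKclosed : IsClosed (K : Set H) := hKcomp.isClosed
  haveI : T3Space (H ⧸ K) := QuotientGroup.instT3Space K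
  have hle : N ≤ K.comap f := fun n hn => Subgroup.mem_comap.2 (Subgroup.mem_map_of_mem f hn)
  -- the induced map on quotients
  set φ : G ⧸ N →* H ⧸ K := QuotientGroup.map N K f hle with hφ
  have hφc : Continuous φ := by
    rw [(QuotientGroup.isQuotientMap_mk N).continuous_iff]
    have : (φ ∘ QuotientGroup.mk) = fun g : G => (QuotientGroup.mk (f g) : H ⧸ K) := by
      funext g; simp [hφ]
    rw [this]
    exact QuotientGroup.continuous_mk.comp hf
  have hφs : Function.Surjective φ := by
    intro y
    obtain ⟨x, rfl⟩ := QuotientGroup.mk_surjective y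
    obtain ⟨g, rfl⟩ := hsurj x
    exact ⟨QuotientGroup.mk g, by simp [hφ]⟩
  have hφopen : IsOpenMap φ := h (H ⧸ K) φ hφc hφs
  -- images of `N`-saturated sets are open
  have himg : ∀ V : Set G, f '' (V * (N : Set G)) =
      QuotientGroup.mk ⁻¹' (φ '' (QuotientGroup.mk '' V)) := by
    intro V
    ext x
    constructor
    · rintro ⟨_, ⟨v, hv, n, hn, rfl⟩, rfl⟩
      refine ⟨QuotientGroup.mk v, Set.mem_image_of_mem _ hv, ?_⟩
      show (QuotientGroup.mk (f v) : H ⧸ K) = QuotientGroup.mk (f (v * n))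
      rw [QuotientGroup.eq]
      refine Subgroup.mem_map.2 ⟨v⁻¹ * (v * n), ?_, by simp⟩
      simpa [mul_assoc] using hn
    · rintro ⟨_, ⟨v, hv, rfl⟩, hx⟩
      have : (QuotientGroup.mk (f v) : H ⧸ K) = QuotientGroup.mk x := hx
      rw [QuotientGroup.eq] at this
      obtain ⟨n, hn, hfn⟩ := Subgroup.mem_map.1 this
      refine ⟨v * n, ⟨v, hv, n, hn, rfl⟩, ?_⟩
      simp [map_mul, hfn]
  have hVNopen : ∀ V : Set G, IsOpen V → IsOpen (f '' (V * (N : Set G))) := by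
    intro V hV
    rw [himg]
    exact (hφopen _ ((QuotientGroup.isOpenMap_coe) V hV)).preimage QuotientGroup.continuous_mk
  -- key step: `f '' U` is a neighborhood of `1` for `U` an open neighborhood of `1`
  have key : ∀ U : Set G, IsOpen U → (1 : G) ∈ U → f '' U ∈ 𝓝 (1 : H) := by
    intro U hU h1U
    -- saturate by the kernel
    set U' : Set G := U * (f.ker : Set G) with hU'def
    have hU'open : IsOpen U' := hU.mul_right
    have h1U' : (1 : G) ∈ U' := ⟨1, h1U, 1, f.ker.one_mem, mul_one 1⟩
    have hker : (f.ker : Set G) ⊆ U' := fun d hd => ⟨1, h1U, d, hd, one_mul d⟩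
    have hfU' : f '' U' = f '' U := by
      refine subset_antisymm ?_ (Set.image_mono fun u hu => ⟨u, hu, 1, f.ker.one_mem, mul_one u⟩)
      rintro _ ⟨_, ⟨u, hu, d, hd, rfl⟩, rfl⟩
      exact ⟨u, hu, by simp [map_mul, MonoidHom.mem_ker.1 hd]⟩
    -- the compact set `C = f(N \ U')` misses `1`
    set C : Set H := f '' ((N : Set G) \ U') with hCdef
    have hCcomp : IsCompact C := (hN.diff hU'open).image hf
    have h1C : (1 : H) ∉ C := by
      rintro ⟨n, ⟨hnN, hnU'⟩, hfn⟩
      exact hnU' (hker (MonoidHom.mem_ker.2 hfn))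
    -- a closed neighborhood `T` of `1` disjoint from `C`
    obtain ⟨T, hTmem, hTclosed, hTsub⟩ :
        ∃ T ∈ 𝓝 (1 : H), IsClosed T ∧ T ⊆ Cᶜ :=
      exists_mem_nhds_isClosed_subset (hCcomp.isClosed.isOpen_compl.mem_nhds h1C)
    -- an open `S ∋ 1` with `S⁻¹ * S ⊆ T`
    have hcont : Continuous fun p : H × H => p.1⁻¹ * p.2 := by continuity
    have hT11 : (fun p : H × H => p.1⁻¹ * p.2) ⁻¹' T ∈ 𝓝 ((1 : H), (1 : H)) := by
      refine hcont.continuousAt.preimage_mem_nhds ?_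
      simpa using hTmem
    obtain ⟨u, v, hu, h1u, hv, h1v, huv⟩ := mem_nhds_prod_iff'.1 hT11
    set S : Set H := u ∩ v with hSdef
    have hSopen : IsOpen S := hu.inter hv
    have h1S : (1 : H) ∈ S := ⟨h1u, h1v⟩
    have hSsub : ∀ a ∈ S, ∀ b ∈ S, a⁻¹ * b ∈ T := fun a ha b hb =>
      huv (Set.mk_mem_prod ha.1 hb.2)
    -- the compact set `N' = N ∩ f⁻¹(T)` sits inside `U'`
    set N' : Set G := (N : Set G) ∩ f ⁻¹' T with hN'def
    have hN'comp : IsCompact N' := hN.inter_right (hTclosed.preimage hf)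
    have hN'sub : N' ⊆ U' := by
      rintro n ⟨hnN, hnT⟩
      by_contra hn
      exact hTsub hnT ⟨n, ⟨hnN, hn⟩, rfl⟩
    obtain ⟨V₀, hV₀mem, hV₀sub⟩ := compact_open_separated_mul_left hN'comp hU'open hN'sub
    -- the small open neighborhood `V` of `1`
    set V : Set G := interior V₀ ∩ f ⁻¹' S with hVdef
    have hVopen : IsOpen V := isOpen_interior.inter (hSopen.preimage hf)
    have h1V : (1 : G) ∈ V :=
      ⟨mem_interior_iff_mem_nhds.2 hV₀mem, by simpa using h1S⟩
    -- `f '' (V * N) ∩ S` is an open neighborhood of `1` inside `f '' U`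
    have hsub : f '' (V * (N : Set G)) ∩ S ⊆ f '' U := by
      rintro x ⟨⟨_, ⟨w, hw, n, hn, rfl⟩, rfl⟩, hxS⟩
      have hfwS : f w ∈ S := hw.2
      have hfnT : f n ∈ T := by
        have := hSsub _ hfwS _ hxS
        simpa [map_mul, mul_assoc] using this
      have hmem : w * n ∈ U' := hV₀sub ⟨w, interior_subset hw.1, n, ⟨hn, hfnT⟩, rfl⟩
      rw [← hfU']
      exact Set.mem_image_of_mem f hmem
    have h1mem : (1 : H) ∈ f '' (V * (N : Set G)) ∩ S := by
      refine ⟨⟨1, ⟨1, h1V, 1, N.one_mem, mul_one 1⟩, map_one f⟩, h1S⟩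
    exact Filter.mem_of_superset
      (((hVNopen V hVopen).inter hSopen).mem_nhds h1mem) hsub
  -- conclude that `f` is an open map by translating
  intro U hU
  rw [isOpen_iff_mem_nhds]
  rintro _ ⟨x, hx, rfl⟩
  have hU₁open : IsOpen ((x⁻¹ * ·) '' U) := (Homeomorph.mulLeft x⁻¹).isOpenMap U hU
  have h1U₁ : (1 : G) ∈ (x⁻¹ * ·) '' U := ⟨x, hx, by simp⟩
  have hnb : f '' ((x⁻¹ * ·) '' U) ∈ 𝓝 (1 : H) := key _ hU₁open h1U₁
  have himg2 : (f x * ·) '' (f '' ((x⁻¹ * ·) '' U)) = f '' U := by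
    rw [Set.image_image, Set.image_image]
    refine Set.image_congr fun a _ => ?_
    simp [map_mul]
  have := Filter.image_mem_map (m := (f x * ·)) hnb
  rw [map_mul_left_nhds_one] at this
  rwa [himg2] at this
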